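/- arXiv:2504.04016 — 2 statements merged into one kernel-verified Lean document; each statement's English description precedes it below -/
import Mathlib

section
/- Convexity lower bound for the row- and column-wise loss (Eq. (6)): for all matrices M1, M2 ∈ ℝ^{n1×n2} with ‖M1‖_∞ ≤ α and ‖M2‖_∞ ≤ α, L(M1) − L(M2) ≥ tr( ∇L(M2)ᵀ (M1 − M2) ) + D_s²(M1 − M2). -/
open scoped BigOperators Classical
open MeasureTheory ProbabilityTheory Matrix

noncomputable section

namespace NMC

/-- Real `n1 × n2` matrices. -/
abbrev Mat (n1 n2 : ℕ) := Matrix (Fin n1) (Fin n2) ℝ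

variable {n1 n2 : ℕ}

/-- The pairwise pseudo-log-likelihood loss
`l_{i1j1,i2j2}(m1,m2) = log(1 + exp(−(x1 − x2)(m1 − m2)))`. -/
def pl (x1 x2 m1 m2 : ℝ) : ℝ := Real.log (1 + Real.exp (-((x1 - x2) * (m1 - m2))))

/-- The row- and column-wise matrix U-statistic loss `L(M)`. -/
def lossL (X W M : Mat n1 n2) : ℝ :=
  (1 / (n2 : ℝ)) * ∑ i : Fin n1, ∑ j1 : Fin n2, ∑ j2 : Fin n2,
      W i j1 * W i j2 * pl (X i j1) (X i j2) (M i j1) (M i j2) +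
  (1 / (n1 : ℝ)) * ∑ j : Fin n2, ∑ i1 : Fin n1, ∑ i2 : Fin n1,
      W i1 j * W i2 j * pl (X i1 j) (X i2 j) (M i1 j) (M i2 j)

/-- Update a single entry of a matrix. -/
def updEntry (M : Mat n1 n2) (i : Fin n1) (j : Fin n2) (t : ℝ) : Mat n1 n2 :=
  fun i' j' => if i' = i ∧ j' = j then t else M i' j'

/-- The gradient matrix `∇L(M)`, whose `(i,j)` entry is the partial derivative
`∂L(M)/∂m_{ij}`. -/
def gradL (X W M : Mat n1 n2) : Mat n1 n2 :=
  fun i j => deriv (fun t => lossL X W (updEntry M i j t)) (M i j)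

/-- Frobenius norm. -/
def frobNorm (A : Mat n1 n2) : ℝ := Real.sqrt (∑ i, ∑ j, A i j ^ 2)

/-- Entrywise sup norm `‖A‖_∞ = max_{i,j} |a_{ij}|`. -/
def infNorm (A : Mat n1 n2) : ℝ := sSup (Set.range fun p : Fin n1 × Fin n2 => |A p.1 p.2|)

/-- The (unsorted) singular values of `A`: square roots of eigenvalues of `Aᴴ A`. -/
def svalsUnsorted (A : Mat n1 n2) : Fin n2 → ℝ :=
  fun k => Real.sqrt ((Matrix.isHermitian_conjTranspose_mul_self A).eigenvalues k)

/-- Nuclear norm `‖A‖_*`: sum of the singular values. -/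
def nuclNorm (A : Mat n1 n2) : ℝ := ∑ k, svalsUnsorted A k

/-- `sval A k` is the `k`-th largest singular value of `A` (1-indexed), `σ_k(A)`. -/
def sval (A : Mat n1 n2) (k : ℕ) : ℝ :=
  if h : 1 ≤ k ∧ k ≤ n2 then
    svalsUnsorted A (Tuple.sort (svalsUnsorted A) ⟨n2 - k, by omega⟩)
  else 0

/-- Spectral norm `‖A‖ = σ_1(A)`. -/
def specNorm (A : Mat n1 n2) : ℝ := sval A 1

/-- Tail sum of singular values `Σ_{k=r}^{n1 ∧ n2} σ_k(A)`. -/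
def tailSum (A : Mat n1 n2) (r : ℕ) : ℝ := ∑ k ∈ Finset.Icc r (min n1 n2), sval A k

/-- Mean of the entries of a matrix, `M_m(A) = 1ᵀ A 1/(n1 n2)`. -/
def matMean (A : Mat n1 n2) : ℝ := (∑ i, ∑ j, A i j) / ((n1 : ℝ) * (n2 : ℝ))

/-- `M ⊕ c = M + c 1 1ᵀ`. -/
def oplus (M : Mat n1 n2) (c : ℝ) : Mat n1 n2 := fun i j => M i j + c

/-- The weights `𝒲_{i1j1,i2j2}`. -/
def wgt (al : ℝ) (X W : Mat n1 n2) (i1 : Fin n1) (j1 : Fin n2) (i2 : Fin n1) (j2 : Fin n2) : ℝ :=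
  W i1 j1 * W i2 j2 * (X i1 j1 - X i2 j2) ^ 2 /
    (4 + 2 * Real.exp (2 * al * (X i1 j1 - X i2 j2)) +
      2 * Real.exp (2 * al * (X i2 j2 - X i1 j1)))

/-- The sample semi-norm squared `D_s²(M)`. -/
def Ds2 (al : ℝ) (X W M : Mat n1 n2) : ℝ :=
  (1 / (n2 : ℝ)) * ∑ i : Fin n1, ∑ j1 : Fin n2, ∑ j2 : Fin n2,
      (M i j1 - M i j2) ^ 2 * wgt al X W i j1 i j2 +
  (1 / (n1 : ℝ)) * ∑ j : Fin n2, ∑ i1 : Fin n1, ∑ i2 : Fin n1,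
      (M i1 j - M i2 j) ^ 2 * wgt al X W i1 j i2 j

/-- The population semi-norm squared `D²(M)` (all weights equal to 1). -/
def D2 (M : Mat n1 n2) : ℝ :=
  (1 / (n2 : ℝ)) * ∑ i : Fin n1, ∑ j1 : Fin n2, ∑ j2 : Fin n2, (M i j1 - M i j2) ^ 2 +
  (1 / (n1 : ℝ)) * ∑ j : Fin n2, ∑ i1 : Fin n1, ∑ i2 : Fin n1, (M i1 j - M i2 j) ^ 2

/-- `L_x`: squared range of the observed entries of `X`. -/
def Lx (X W : Mat n1 n2) : ℝ :=
  (sSup {x : ℝ | ∃ p : Fin n1 × Fin n2, W p.1 p.2 = 1 ∧ x = X p.1 p.2} -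
    sInf {x : ℝ | ∃ p : Fin n1 × Fin n2, W p.1 p.2 = 1 ∧ x = X p.1 p.2}) ^ 2

/-- `L_w = max_j (Σ_i W_{ij})/n1 + max_i (Σ_j W_{ij})/n2`. -/
def Lw (W : Mat n1 n2) : ℝ :=
  sSup (Set.range fun j : Fin n2 => ∑ i, W i j) / (n1 : ℝ) +
  sSup (Set.range fun i : Fin n1 => ∑ j, W i j) / (n2 : ℝ)

/-- `L_f = L_x L_w / 2`, the Lipschitz constant of `∇L`. -/
def Lf (X W : Mat n1 n2) : ℝ := Lx X W * Lw W / 2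

/-- The objective of the proximal problem defining `S_{lam,al}(A)`. -/
def proxObj (lam : ℝ) (A Y : Mat n1 n2) : ℝ := 1 / 2 * frobNorm (Y - A) ^ 2 + lam * nuclNorm Y

/-- `IsProx lam al A Y` states that `Y = S_{lam,al}(A)`, i.e. `Y` minimizes
`(1/2)‖Y − A‖_F² + lam ‖Y‖_*` over `{Y : ‖Y‖_∞ ≤ al}`. -/
def IsProx (lam al : ℝ) (A Y : Mat n1 n2) : Prop :=
  infNorm Y ≤ al ∧ ∀ Z : Mat n1 n2, infNorm Z ≤ al → proxObj lam A Y ≤ proxObj lam A Z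

/-- The penalized objective `F(M) = L(M) + lam ‖M‖_*`. -/
def objF (X W : Mat n1 n2) (lam : ℝ) (M : Mat n1 n2) : ℝ := lossL X W M + lam * nuclNorm M

/-- `Mh` is a minimizer of `L(M) + lam ‖M‖_*` over `{M : ‖M‖_∞ ≤ al}`. -/
def IsMin (X W : Mat n1 n2) (lam al : ℝ) (Mh : Mat n1 n2) : Prop :=
  infNorm Mh ≤ al ∧ ∀ M : Mat n1 n2, infNorm M ≤ al → objF X W lam Mh ≤ objF X W lam M

/-- `c` minimizes `c' ↦ ‖M ⊕ c'‖_*`; then `T(M) = M ⊕ c`. -/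
def IsMinShift (M : Mat n1 n2) (c : ℝ) : Prop :=
  ∀ c' : ℝ, nuclNorm (oplus M c) ≤ nuclNorm (oplus M c')

/-- `U` and `V` have as columns top-`r` left and right singular vectors of `A`. -/
def IsTopSVD (r : ℕ) (A : Mat n1 n2) (U : Matrix (Fin n1) (Fin r) ℝ)
    (V : Matrix (Fin n2) (Fin r) ℝ) : Prop :=
  Uᵀ * U = 1 ∧ Vᵀ * V = 1 ∧
  A * V = U * Matrix.diagonal (fun k : Fin r => sval A (k.1 + 1)) ∧
  Aᵀ * U = V * Matrix.diagonal (fun k : Fin r => sval A (k.1 + 1))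

/-- A choice of top-`r` left and right singular vector matrices of `A`. -/
def UVchoice (r : ℕ) (A : Mat n1 n2) :
    Matrix (Fin n1) (Fin r) ℝ × Matrix (Fin n2) (Fin r) ℝ :=
  if h : ∃ p : Matrix (Fin n1) (Fin r) ℝ × Matrix (Fin n2) (Fin r) ℝ,
      IsTopSVD r A p.1 p.2 then h.choose else (0, 0)

/-- `Θ2 = (I − UUᵀ)(Θ ⊖ M_m(Θ))(I − VVᵀ)`, with `U,V` top-`r` singular vectors of
`M* ⊕ M_m(Θ)`. -/
def theta2 (Mstar : Mat n1 n2) (r : ℕ) (Θ : Mat n1 n2) : Mat n1 n2 :=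
  (1 - (UVchoice r (oplus Mstar (matMean Θ))).1 * (UVchoice r (oplus Mstar (matMean Θ))).1ᵀ) *
    oplus Θ (-matMean Θ) *
  (1 - (UVchoice r (oplus Mstar (matMean Θ))).2 * (UVchoice r (oplus Mstar (matMean Θ))).2ᵀ)

/-- `Θ1 = Θ ⊖ M_m(Θ) − Θ2`. -/
def theta1 (Mstar : Mat n1 n2) (r : ℕ) (Θ : Mat n1 n2) : Mat n1 n2 :=
  oplus Θ (-matMean Θ) - theta2 Mstar r Θ

/-- The cone `C_r = {Θ : ‖Θ2‖_* ≤ 4 Σ_{k=r}^{n1∧n2} σ_k(M*) + 3‖Θ1‖_*}`. -/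
def coneC (Mstar : Mat n1 n2) (r : ℕ) : Set (Mat n1 n2) :=
  {Θ | nuclNorm (theta2 Mstar r Θ) ≤ 4 * tailSum Mstar r + 3 * nuclNorm (theta1 Mstar r Θ)}

/-- Euclidean norm of a vector. -/
def euclNorm {n : ℕ} (v : Fin n → ℝ) : ℝ := Real.sqrt (∑ i, v i ^ 2)

/-- The quantity `𝔅(M*)` of Theorem 4, computed from `T(M*) = M* ⊕ cstar`. -/
def Bconst (Mstar : Mat n1 n2) (cstar : ℝ) : ℝ :=
  euclNorm ((1 - (UVchoice (oplus Mstar cstar).rank (oplus Mstar cstar)).1 *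
        (UVchoice (oplus Mstar cstar).rank (oplus Mstar cstar)).1ᵀ).mulVec fun _ => (1 : ℝ)) *
    euclNorm ((1 - (UVchoice (oplus Mstar cstar).rank (oplus Mstar cstar)).2 *
        (UVchoice (oplus Mstar cstar).rank (oplus Mstar cstar)).2ᵀ).mulVec fun _ => (1 : ℝ)) /
      Real.sqrt ((n1 : ℝ) * (n2 : ℝ)) -
  Real.sqrt ((n1 : ℝ) * (n2 : ℝ)) *
    |matMean ((UVchoice (oplus Mstar cstar).rank (oplus Mstar cstar)).1 *
      (UVchoice (oplus Mstar cstar).rank (oplus Mstar cstar)).2ᵀ)|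

/-- The log-normalization function `b(m) = log ∫ exp(x m + f(x)) dν(x)`. -/
def bFun (ν : Measure ℝ) (f : ℝ → ℝ) (m : ℝ) : ℝ :=
  Real.log ((∫⁻ x, ENNReal.ofReal (Real.exp (x * m + f x)) ∂ν).toReal)

/-- The random variables `Z̃_{i1j1,i2j2}` of the conditional sub-Gaussian condition. -/
def Ztil {Ω : Type} (Mstar : Mat n1 n2) (X : Ω → Mat n1 n2)
    (i1 : Fin n1) (j1 : Fin n2) (i2 : Fin n1) (j2 : Fin n2) (ω : Ω) : ℝ :=
  (X ω i1 j1 - X ω i2 j2) /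
    (2 + Real.exp ((X ω i1 j1 - X ω i2 j2) * (Mstar i1 j1 - Mstar i2 j2)) +
      Real.exp (-((X ω i1 j1 - X ω i2 j2) * (Mstar i1 j1 - Mstar i2 j2))))

/-- `π_U = max_{i,j} P(W_{ij} = 1)`. -/
def piU {Ω : Type} [MeasurableSpace Ω] (P : Measure Ω) (W : Ω → Mat n1 n2) : ℝ :=
  sSup (Set.range fun p : Fin n1 × Fin n2 => (P {ω | W ω p.1 p.2 = 1}).toReal)

/-- `π_L = min_{i,j} P(W_{ij} = 1)`. -/
def piL {Ω : Type} [MeasurableSpace Ω] (P : Measure Ω) (W : Ω → Mat n1 n2) : ℝ :=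
  sInf (Set.range fun p : Fin n1 × Fin n2 => (P {ω | W ω p.1 p.2 = 1}).toReal)

/-- Rectangular diagonal matrix with diagonal entries `d 0, d 1, …`. -/
def rectDiag (n1 n2 : ℕ) (d : ℕ → ℝ) : Mat n1 n2 :=
  fun i j => if (i : ℕ) = (j : ℕ) then d (i : ℕ) else 0


/-! ### Auxiliary material for `statement14` -/

/-- Partial derivative of `pl` in its third argument. -/
def plD (x1 x2 m1 m2 : ℝ) : ℝ :=
  -(x1 - x2) * Real.exp (-((x1 - x2) * (m1 - m2))) / (1 + Real.exp (-((x1 - x2) * (m1 - m2))))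

lemma hasDerivAt_pl_left (x1 x2 m1 m2 : ℝ) :
    HasDerivAt (fun t => pl x1 x2 t m2) (plD x1 x2 m1 m2) m1 := by
  have h0 : HasDerivAt (fun t : ℝ => -((x1 - x2) * (t - m2))) (-(x1 - x2)) m1 := by
    simpa using (((hasDerivAt_id m1).sub_const m2).const_mul (x1 - x2)).fun_neg
  have h3 := ((h0.exp).const_add 1).log (by positivity)
  unfold pl plD
  convert h3 using 1
  ring

lemma hasDerivAt_pl_right (x1 x2 m1 m2 : ℝ) :
    HasDerivAt (fun t => pl x1 x2 m1 t) (-plD x1 x2 m1 m2) m2 := by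
  have h0 : HasDerivAt (fun t : ℝ => -((x1 - x2) * (m1 - t))) (x1 - x2) m2 := by
    simpa using (((hasDerivAt_id m2).const_sub m1).const_mul (x1 - x2)).fun_neg
  have h3 := ((h0.exp).const_add 1).log (by positivity)
  unfold pl plD
  convert h3 using 1
  ring

lemma pl_self (x1 x2 t : ℝ) : pl x1 x2 t t = Real.log 2 := by
  simp [pl]
  norm_num

lemma plD_self (x m1 m2 : ℝ) : plD x x m1 m2 = 0 := by simp [plD]

/-- The function of the gap `u = m1 - m2`. -/
def hF (d u : ℝ) : ℝ := Real.log (1 + Real.exp (-(d * u)))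
def hD (d u : ℝ) : ℝ := -d * Real.exp (-(d * u)) / (1 + Real.exp (-(d * u)))
def hDD (d u : ℝ) : ℝ := d ^ 2 * Real.exp (-(d * u)) / (1 + Real.exp (-(d * u))) ^ 2

lemma hasDerivAt_hF (d u : ℝ) : HasDerivAt (hF d) (hD d u) u := by
  have h0 : HasDerivAt (fun t : ℝ => -(d * t)) (-d) u := by
    simpa using ((hasDerivAt_id u).const_mul d).fun_neg
  have h3 := ((h0.exp).const_add 1).log (by positivity)
  unfold hF hD
  convert h3 using 1
  ring

lemma hasDerivAt_hD (d u : ℝ) : HasDerivAt (hD d) (hDD d u) u := by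
  have h0 : HasDerivAt (fun t : ℝ => -(d * t)) (-d) u := by
    simpa using ((hasDerivAt_id u).const_mul d).fun_neg
  have hnum : HasDerivAt (fun t : ℝ => -d * Real.exp (-(d * t)))
      (-d * (Real.exp (-(d * u)) * -d)) u := (h0.exp).const_mul (-d)
  have hden : HasDerivAt (fun t : ℝ => 1 + Real.exp (-(d * t)))
      (Real.exp (-(d * u)) * -d) u := (h0.exp).const_add 1
  have h := hnum.div hden (by positivity)
  unfold hD hDD
  exact h.congr_deriv (by ring)

lemma hDD_ge (al d u : ℝ) (hu : |u| ≤ 2 * al) :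
    2 * (d ^ 2 / (4 + 2 * Real.exp (2 * al * d) + 2 * Real.exp (-(2 * al * d)))) ≤ hDD d u := by
  have hE : Real.exp (-(d*u)) > 0 := Real.exp_pos _
  have key : Real.exp (d*u) + Real.exp (-(d*u)) ≤ Real.exp (2*al*d) + Real.exp (-(2*al*d)) := by
    have h1 : Real.cosh (d * u) ≤ Real.cosh (2 * al * d) := by
      rw [Real.cosh_le_cosh]
      calc |d * u| = |d| * |u| := abs_mul d u
        _ ≤ |d| * (2 * al) := by
            apply mul_le_mul_of_nonneg_left hu (abs_nonneg d)
        _ ≤ |2 * al * d| := by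
            rw [abs_mul]; nlinarith [abs_nonneg d, le_abs_self (2*al), abs_nonneg (2*al)]
    nlinarith [Real.cosh_eq (d*u), Real.cosh_eq (2*al*d)]
  have hrw : hDD d u = d ^ 2 / (2 + Real.exp (d*u) + Real.exp (-(d*u))) := by
    unfold hDD
    rw [div_eq_div_iff (by positivity) (by positivity)]
    have : Real.exp (d*u) * Real.exp (-(d*u)) = 1 := by
      rw [← Real.exp_add]; simp
    nlinarith [this]
  rw [hrw]
  have hden1 : (0:ℝ) < 2 + Real.exp (d*u) + Real.exp (-(d*u)) := by positivity
  have hden2 : (0:ℝ) < 4 + 2 * Real.exp (2 * al * d) + 2 * Real.exp (-(2 * al * d)) := by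
    positivity
  have h2a : 2 * (d ^ 2 / (4 + 2 * Real.exp (2 * al * d) + 2 * Real.exp (-(2 * al * d))))
      = (2 * d ^ 2) / (4 + 2 * Real.exp (2 * al * d) + 2 * Real.exp (-(2 * al * d))) := by ring
  rw [h2a, div_le_div_iff₀ hden2 hden1]
  nlinarith [sq_nonneg d, key]

lemma key_tangent (al d u1 u2 : ℝ) (h1 : |u1| ≤ 2 * al) (h2 : |u2| ≤ 2 * al) :
    hD d u2 * (u1 - u2) +
      (u1 - u2) ^ 2 * (d ^ 2 / (4 + 2 * Real.exp (2 * al * d) + 2 * Real.exp (-(2 * al * d))))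
      ≤ hF d u1 - hF d u2 := by
  set w : ℝ := d ^ 2 / (4 + 2 * Real.exp (2 * al * d) + 2 * Real.exp (-(2 * al * d))) with hw
  set φ : ℝ → ℝ := fun u => hF d u - w * u ^ 2 with hφ
  have hφd : ∀ u : ℝ, HasDerivAt φ (hD d u - 2 * w * u) u := by
    intro u
    have h2' : HasDerivAt (fun u : ℝ => w * u ^ 2) (2 * w * u) u := by
      have := ((hasDerivAt_pow 2 u).const_mul w)
      exact this.congr_deriv (by ring)
    exact (hasDerivAt_hF d u).sub h2'
  have hconv : ConvexOn ℝ (Set.Icc (-(2*al)) (2*al)) φ := by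
    apply convexOn_of_hasDerivWithinAt2_nonneg (convex_Icc _ _)
      (f' := fun u => hD d u - 2 * w * u) (f'' := fun u => hDD d u - 2 * w)
    · intro u _
      exact ((hφd u).continuousAt).continuousWithinAt
    · intro u _
      exact (hφd u).hasDerivWithinAt
    · intro u _
      have hd : HasDerivAt (fun u => hD d u - 2 * w * u) (hDD d u - 2 * w) u := by
        have : HasDerivAt (fun u : ℝ => 2 * w * u) (2 * w) u := by
          simpa using ((hasDerivAt_id u).const_mul (2*w))
        exact (hasDerivAt_hD d u).sub this
      exact hd.hasDerivWithinAt
    · intro u hu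
      rw [interior_Icc] at hu
      have : |u| ≤ 2 * al := by
        rw [abs_le]; exact ⟨hu.1.le, hu.2.le⟩
      have := hDD_ge al d u this
      linarith
  have hu1 : u1 ∈ Set.Icc (-(2*al)) (2*al) := by rw [Set.mem_Icc, ← abs_le]; exact h1
  have hu2 : u2 ∈ Set.Icc (-(2*al)) (2*al) := by rw [Set.mem_Icc, ← abs_le]; exact h2
  have tangent : φ u2 + (hD d u2 - 2 * w * u2) * (u1 - u2) ≤ φ u1 := by
    rcases lt_trichotomy u2 u1 with h | h | h
    · have := hconv.le_slope_of_hasDerivAt hu2 hu1 h (hφd u2)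
      rw [slope_def_field, le_div_iff₀ (by linarith : (0:ℝ) < u1 - u2)] at this
      nlinarith
    · subst h; simp
    · have := hconv.slope_le_of_hasDerivAt hu1 hu2 h (hφd u2)
      rw [slope_def_field, div_le_iff₀ (by linarith : (0:ℝ) < u2 - u1)] at this
      nlinarith
  simp only [hφ] at tangent
  nlinarith [tangent]

lemma per_term (al : ℝ) (x1 x2 w1 w2 a1 a2 b1 b2 : ℝ)
    (hw1 : w1 = 0 ∨ w1 = 1) (hw2 : w2 = 0 ∨ w2 = 1)
    (ha1 : |a1| ≤ al) (ha2 : |a2| ≤ al) (hb1 : |b1| ≤ al) (hb2 : |b2| ≤ al) :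
    w1 * w2 * plD x1 x2 b1 b2 * ((a1 - b1) - (a2 - b2)) +
      ((a1 - b1) - (a2 - b2)) ^ 2 *
        (w1 * w2 * (x1 - x2) ^ 2 /
          (4 + 2 * Real.exp (2 * al * (x1 - x2)) + 2 * Real.exp (2 * al * (x2 - x1))))
      ≤ w1 * w2 * pl x1 x2 a1 a2 - w1 * w2 * pl x1 x2 b1 b2 := by
  rcases hw1 with rfl | rfl
  · simp
  rcases hw2 with rfl | rfl
  · simp
  simp only [one_mul, mul_one]
  have e1 : 2 * al * (x2 - x1) = -(2 * al * (x1 - x2)) := by ring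
  rw [e1]
  have habs : ∀ p q : ℝ, |p| ≤ al → |q| ≤ al → |p - q| ≤ 2 * al := by
    intro p q hp hq
    rw [sub_eq_add_neg]
    refine (abs_add_le _ _).trans ?_
    rw [abs_neg]; linarith
  have hd := key_tangent al (x1 - x2) (a1 - a2) (b1 - b2)
    (habs _ _ ha1 ha2) (habs _ _ hb1 hb2)
  have e2 : (a1 - b1) - (a2 - b2) = (a1 - a2) - (b1 - b2) := by ring
  rw [e2]
  exact hd

lemma summand_hasDerivAt (X W M : Mat n1 n2) (i i' : Fin n1) (j j1 j2 : Fin n2) :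
    HasDerivAt (fun t => W i' j1 * W i' j2 *
        pl (X i' j1) (X i' j2) (updEntry M i j t i' j1) (updEntry M i j t i' j2))
      ((if i' = i ∧ j1 = j then W i j * W i' j2 * plD (X i j) (X i' j2) (M i j) (M i' j2) else 0)
        + (if i' = i ∧ j2 = j then
            -(W i' j1 * W i j * plD (X i' j1) (X i j) (M i' j1) (M i j)) else 0))
      (M i j) := by
  unfold updEntry
  by_cases hP : i' = i ∧ j1 = j <;> by_cases hQ : i' = i ∧ j2 = j
  · simp only [if_pos hP, if_pos hQ, pl_self]
    rw [hP.1, hP.2, hQ.2]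
    simp only [plD_self, mul_zero, neg_zero, add_zero]
    exact hasDerivAt_const _ _
  · simp only [if_pos hP, if_neg hQ, add_zero]
    rw [hP.1, hP.2]
    exact (hasDerivAt_pl_left (X i j) (X i j2) (M i j) (M i j2)).const_mul _
  · simp only [if_neg hP, if_pos hQ, zero_add]
    rw [hQ.1, hQ.2]
    have := (hasDerivAt_pl_right (X i j1) (X i j) (M i j1) (M i j)).const_mul
      (W i j1 * W i j)
    exact this.congr_deriv (by ring)
  · simp only [if_neg hP, if_neg hQ, add_zero]
    exact hasDerivAt_const _ _

lemma summand_hasDerivAt_col (X W M : Mat n1 n2) (i i1 i2 : Fin n1) (j j' : Fin n2) :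
    HasDerivAt (fun t => W i1 j' * W i2 j' *
        pl (X i1 j') (X i2 j') (updEntry M i j t i1 j') (updEntry M i j t i2 j'))
      ((if i1 = i ∧ j' = j then W i j * W i2 j * plD (X i j) (X i2 j) (M i j) (M i2 j) else 0)
        + (if i2 = i ∧ j' = j then
            -(W i1 j * W i j * plD (X i1 j) (X i j) (M i1 j) (M i j)) else 0))
      (M i j) := by
  unfold updEntry
  by_cases hP : i1 = i ∧ j' = j <;> by_cases hQ : i2 = i ∧ j' = j
  · simp only [if_pos hP, if_pos hQ, pl_self]
    rw [hP.1, hP.2, hQ.1]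
    simp only [plD_self, mul_zero, neg_zero, add_zero]
    exact hasDerivAt_const _ _
  · simp only [if_pos hP, if_neg hQ, add_zero]
    rw [hP.1, hP.2]
    exact (hasDerivAt_pl_left (X i j) (X i2 j) (M i j) (M i2 j)).const_mul _
  · simp only [if_neg hP, if_pos hQ, zero_add]
    rw [hQ.1, hQ.2]
    have := (hasDerivAt_pl_right (X i1 j) (X i j) (M i1 j) (M i j)).const_mul
      (W i1 j * W i j)
    exact this.congr_deriv (by ring)
  · simp only [if_neg hP, if_neg hQ, add_zero]
    exact hasDerivAt_const _ _

lemma gradL_apply (X W M : Mat n1 n2) (i : Fin n1) (j : Fin n2) :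
    gradL X W M i j =
      (1 / (n2 : ℝ)) * ((∑ j2, W i j * W i j2 * plD (X i j) (X i j2) (M i j) (M i j2))
          - ∑ j1, W i j1 * W i j * plD (X i j1) (X i j) (M i j1) (M i j))
      + (1 / (n1 : ℝ)) * ((∑ i2, W i j * W i2 j * plD (X i j) (X i2 j) (M i j) (M i2 j))
          - ∑ i1, W i1 j * W i j * plD (X i1 j) (X i j) (M i1 j) (M i j)) := by
  have hrow : HasDerivAt
      (fun t => ∑ i' : Fin n1, ∑ j1 : Fin n2, ∑ j2 : Fin n2, W i' j1 * W i' j2 *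
        pl (X i' j1) (X i' j2) (updEntry M i j t i' j1) (updEntry M i j t i' j2))
      (∑ i' : Fin n1, ∑ j1 : Fin n2, ∑ j2 : Fin n2,
        ((if i' = i ∧ j1 = j then W i j * W i' j2 * plD (X i j) (X i' j2) (M i j) (M i' j2) else 0)
        + (if i' = i ∧ j2 = j then
            -(W i' j1 * W i j * plD (X i' j1) (X i j) (M i' j1) (M i j)) else 0)))
      (M i j) := by
    apply HasDerivAt.fun_sum; intro i' _
    apply HasDerivAt.fun_sum; intro j1 _
    apply HasDerivAt.fun_sum; intro j2 _
    exact summand_hasDerivAt X W M i i' j j1 j2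
  have hcol : HasDerivAt
      (fun t => ∑ j' : Fin n2, ∑ i1 : Fin n1, ∑ i2 : Fin n1, W i1 j' * W i2 j' *
        pl (X i1 j') (X i2 j') (updEntry M i j t i1 j') (updEntry M i j t i2 j'))
      (∑ j' : Fin n2, ∑ i1 : Fin n1, ∑ i2 : Fin n1,
        ((if i1 = i ∧ j' = j then W i j * W i2 j * plD (X i j) (X i2 j) (M i j) (M i2 j) else 0)
        + (if i2 = i ∧ j' = j then
            -(W i1 j * W i j * plD (X i1 j) (X i j) (M i1 j) (M i j)) else 0)))
      (M i j) := by
    apply HasDerivAt.fun_sum; intro j' _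
    apply HasDerivAt.fun_sum; intro i1 _
    apply HasDerivAt.fun_sum; intro i2 _
    exact summand_hasDerivAt_col X W M i i1 i2 j j'
  have hfull := (hrow.const_mul (1 / (n2 : ℝ))).fun_add (hcol.const_mul (1 / (n1 : ℝ)))
  rw [gradL]
  unfold lossL
  rw [hfull.deriv]
  have hrowsum : (∑ i' : Fin n1, ∑ j1 : Fin n2, ∑ j2 : Fin n2,
        ((if i' = i ∧ j1 = j then W i j * W i' j2 * plD (X i j) (X i' j2) (M i j) (M i' j2) else 0)
        + (if i' = i ∧ j2 = j then
            -(W i' j1 * W i j * plD (X i' j1) (X i j) (M i' j1) (M i j)) else 0)))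
      = (∑ j2, W i j * W i j2 * plD (X i j) (X i j2) (M i j) (M i j2))
          - ∑ j1, W i j1 * W i j * plD (X i j1) (X i j) (M i j1) (M i j) := by
    simp only [Finset.sum_add_distrib]
    congr 1
    · simp [ite_and, Finset.sum_ite_eq',
        apply_ite (fun ii => ∑ j2 : Fin n2, W i j * W ii j2 *
          plD (X i j) (X ii j2) (M i j) (M ii j2))]
    · simp [ite_and, Finset.sum_ite_eq',
        apply_ite (fun ii => ∑ j1 : Fin n2, W i j1 * W i j *
          plD (X i j1) (X i j) (M i j1) (M i j))]
  have hcolsum : (∑ j' : Fin n2, ∑ i1 : Fin n1, ∑ i2 : Fin n1,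
        ((if i1 = i ∧ j' = j then W i j * W i2 j * plD (X i j) (X i2 j) (M i j) (M i2 j) else 0)
        + (if i2 = i ∧ j' = j then
            -(W i1 j * W i j * plD (X i1 j) (X i j) (M i1 j) (M i j)) else 0)))
      = (∑ i2, W i j * W i2 j * plD (X i j) (X i2 j) (M i j) (M i2 j))
          - ∑ i1, W i1 j * W i j * plD (X i1 j) (X i j) (M i1 j) (M i j) := by
    simp only [Finset.sum_add_distrib]
    congr 1
    · simp [ite_and, Finset.sum_ite_eq']
    · simp [ite_and, Finset.sum_ite_eq']
  rw [hrowsum, hcolsum]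

lemma pair_split {m : ℕ} (f : Fin m → Fin m → ℝ) (θ : Fin m → ℝ) :
    ∑ j1, ∑ j2, f j1 j2 * (θ j1 - θ j2)
      = ∑ j, θ j * ((∑ j2, f j j2) - ∑ j1, f j1 j) := by
  have h1 : ∑ j1, ∑ j2, f j1 j2 * (θ j1 - θ j2)
      = (∑ j1, ∑ j2, f j1 j2 * θ j1) - ∑ j1, ∑ j2, f j1 j2 * θ j2 := by
    simp_rw [mul_sub, Finset.sum_sub_distrib]
  have h2 : (∑ j1 : Fin m, ∑ j2 : Fin m, f j1 j2 * θ j2)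
      = ∑ j, (∑ j1, f j1 j) * θ j := by
    rw [Finset.sum_comm]
    exact Finset.sum_congr rfl fun j _ => by rw [Finset.sum_mul]
  have h3 : (∑ j1 : Fin m, ∑ j2 : Fin m, f j1 j2 * θ j1)
      = ∑ j, (∑ j2, f j j2) * θ j := by
    exact Finset.sum_congr rfl fun j _ => by rw [Finset.sum_mul]
  rw [h1, h2, h3, ← Finset.sum_sub_distrib]
  exact Finset.sum_congr rfl fun j _ => by ring

lemma trace_formula (X W M Θ : Mat n1 n2) :
    Matrix.trace ((gradL X W M)ᵀ * Θ) =
      (1 / (n2:ℝ)) * ∑ i : Fin n1, ∑ j1 : Fin n2, ∑ j2 : Fin n2,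
        W i j1 * W i j2 * plD (X i j1) (X i j2) (M i j1) (M i j2) * (Θ i j1 - Θ i j2) +
      (1 / (n1:ℝ)) * ∑ j : Fin n2, ∑ i1 : Fin n1, ∑ i2 : Fin n1,
        W i1 j * W i2 j * plD (X i1 j) (X i2 j) (M i1 j) (M i2 j) * (Θ i1 j - Θ i2 j) := by
  have htr : Matrix.trace ((gradL X W M)ᵀ * Θ)
      = ∑ j : Fin n2, ∑ i : Fin n1, gradL X W M i j * Θ i j := by
    simp [Matrix.trace, Matrix.diag, Matrix.mul_apply, Matrix.transpose_apply]
  rw [htr]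
  have expand : ∀ (i : Fin n1) (j : Fin n2), gradL X W M i j * Θ i j =
      (1/(n2:ℝ)) * (Θ i j * ((∑ j2, W i j * W i j2 * plD (X i j) (X i j2) (M i j) (M i j2))
          - ∑ j1, W i j1 * W i j * plD (X i j1) (X i j) (M i j1) (M i j)))
      + (1/(n1:ℝ)) * (Θ i j * ((∑ i2, W i j * W i2 j * plD (X i j) (X i2 j) (M i j) (M i2 j))
          - ∑ i1, W i1 j * W i j * plD (X i1 j) (X i j) (M i1 j) (M i j))) := by
    intro i j; rw [gradL_apply]; ring
  simp_rw [expand, Finset.sum_add_distrib, ← Finset.mul_sum]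
  congr 1
  · congr 1
    rw [Finset.sum_comm]
    refine Finset.sum_congr rfl fun i _ => ?_
    rw [pair_split (fun j1 j2 => W i j1 * W i j2 * plD (X i j1) (X i j2) (M i j1) (M i j2))
      (fun j => Θ i j)]
  · congr 1
    refine Finset.sum_congr rfl fun j _ => ?_
    rw [pair_split (fun i1 i2 => W i1 j * W i2 j * plD (X i1 j) (X i2 j) (M i1 j) (M i2 j))
      (fun i => Θ i j)]


theorem statement14 (n1 n2 : ℕ) (hn1 : 0 < n1) (hn2 : 0 < n2)
    (al : ℝ) (hal : 0 < al)
    (X W : Mat n1 n2) (hW01 : ∀ i j, W i j = 0 ∨ W i j = 1)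
    (M1 M2 : Mat n1 n2) (h1 : infNorm M1 ≤ al) (h2 : infNorm M2 ≤ al) :
    Matrix.trace ((gradL X W M2)ᵀ * (M1 - M2)) + Ds2 al X W (M1 - M2) ≤
      lossL X W M1 - lossL X W M2 := by
  have habs : ∀ (M : Mat n1 n2), infNorm M ≤ al → ∀ i j, |M i j| ≤ al := by
    intro M hM i j
    refine le_trans ?_ hM
    exact le_csSup (Set.Finite.bddAbove (Set.finite_range _)) ⟨(i, j), rfl⟩
  have habs1 := habs M1 h1
  have habs2 := habs M2 h2
  rw [trace_formula]
  unfold Ds2 lossL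
  have hc2 : (0:ℝ) ≤ 1/(n2:ℝ) := by positivity
  have hc1 : (0:ℝ) ≤ 1/(n1:ℝ) := by positivity
  have key_row : ∀ (i : Fin n1) (j1 j2 : Fin n2),
      W i j1 * W i j2 * plD (X i j1) (X i j2) (M2 i j1) (M2 i j2)
          * ((M1 - M2) i j1 - (M1 - M2) i j2)
        + ((M1 - M2) i j1 - (M1 - M2) i j2) ^ 2 * wgt al X W i j1 i j2
      ≤ W i j1 * W i j2 * pl (X i j1) (X i j2) (M1 i j1) (M1 i j2)
        - W i j1 * W i j2 * pl (X i j1) (X i j2) (M2 i j1) (M2 i j2) := by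
    intro i j1 j2
    have := per_term al (X i j1) (X i j2) (W i j1) (W i j2)
      (M1 i j1) (M1 i j2) (M2 i j1) (M2 i j2) (hW01 i j1) (hW01 i j2)
      (habs1 i j1) (habs1 i j2) (habs2 i j1) (habs2 i j2)
    unfold wgt
    simpa only [Matrix.sub_apply] using this
  have key_col : ∀ (j : Fin n2) (i1 i2 : Fin n1),
      W i1 j * W i2 j * plD (X i1 j) (X i2 j) (M2 i1 j) (M2 i2 j)
          * ((M1 - M2) i1 j - (M1 - M2) i2 j)
        + ((M1 - M2) i1 j - (M1 - M2) i2 j) ^ 2 * wgt al X W i1 j i2 j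
      ≤ W i1 j * W i2 j * pl (X i1 j) (X i2 j) (M1 i1 j) (M1 i2 j)
        - W i1 j * W i2 j * pl (X i1 j) (X i2 j) (M2 i1 j) (M2 i2 j) := by
    intro j i1 i2
    have := per_term al (X i1 j) (X i2 j) (W i1 j) (W i2 j)
      (M1 i1 j) (M1 i2 j) (M2 i1 j) (M2 i2 j) (hW01 i1 j) (hW01 i2 j)
      (habs1 i1 j) (habs1 i2 j) (habs2 i1 j) (habs2 i2 j)
    unfold wgt
    simpa only [Matrix.sub_apply] using this
  have hrow : (∑ i : Fin n1, ∑ j1 : Fin n2, ∑ j2 : Fin n2,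
        W i j1 * W i j2 * plD (X i j1) (X i j2) (M2 i j1) (M2 i j2)
          * ((M1 - M2) i j1 - (M1 - M2) i j2))
      + (∑ i : Fin n1, ∑ j1 : Fin n2, ∑ j2 : Fin n2,
        ((M1 - M2) i j1 - (M1 - M2) i j2) ^ 2 * wgt al X W i j1 i j2)
      ≤ (∑ i : Fin n1, ∑ j1 : Fin n2, ∑ j2 : Fin n2,
          W i j1 * W i j2 * pl (X i j1) (X i j2) (M1 i j1) (M1 i j2))
        - ∑ i : Fin n1, ∑ j1 : Fin n2, ∑ j2 : Fin n2,
          W i j1 * W i j2 * pl (X i j1) (X i j2) (M2 i j1) (M2 i j2) := by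
    rw [← Finset.sum_add_distrib, ← Finset.sum_sub_distrib]
    refine Finset.sum_le_sum fun i _ => ?_
    rw [← Finset.sum_add_distrib, ← Finset.sum_sub_distrib]
    refine Finset.sum_le_sum fun j1 _ => ?_
    rw [← Finset.sum_add_distrib, ← Finset.sum_sub_distrib]
    exact Finset.sum_le_sum fun j2 _ => key_row i j1 j2
  have hcol : (∑ j : Fin n2, ∑ i1 : Fin n1, ∑ i2 : Fin n1,
        W i1 j * W i2 j * plD (X i1 j) (X i2 j) (M2 i1 j) (M2 i2 j)
          * ((M1 - M2) i1 j - (M1 - M2) i2 j))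
      + (∑ j : Fin n2, ∑ i1 : Fin n1, ∑ i2 : Fin n1,
        ((M1 - M2) i1 j - (M1 - M2) i2 j) ^ 2 * wgt al X W i1 j i2 j)
      ≤ (∑ j : Fin n2, ∑ i1 : Fin n1, ∑ i2 : Fin n1,
          W i1 j * W i2 j * pl (X i1 j) (X i2 j) (M1 i1 j) (M1 i2 j))
        - ∑ j : Fin n2, ∑ i1 : Fin n1, ∑ i2 : Fin n1,
          W i1 j * W i2 j * pl (X i1 j) (X i2 j) (M2 i1 j) (M2 i2 j) := by
    rw [← Finset.sum_add_distrib, ← Finset.sum_sub_distrib]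
    refine Finset.sum_le_sum fun j _ => ?_
    rw [← Finset.sum_add_distrib, ← Finset.sum_sub_distrib]
    refine Finset.sum_le_sum fun i1 _ => ?_
    rw [← Finset.sum_add_distrib, ← Finset.sum_sub_distrib]
    exact Finset.sum_le_sum fun i2 _ => key_col j i1 i2
  have hr := mul_le_mul_of_nonneg_left hrow hc2
  have hc := mul_le_mul_of_nonneg_left hcol hc1
  nlinarith [hr, hc]

end NMC
end
end

section
/- Lipschitz gradient of the row- and column-wise loss: assume W has at least one nonzero entry and define L_x = (max over observed entries of X minus min over observed entries of X)^2, L_w = max_j (Σ_i W_{ij})/n1 + max_i (Σ_j W_{ij})/n2, and L_f = L_x L_w / 2. Then for all M1, M2 ∈ ℝ^{n1×n2}, ‖∇L(M1) − ∇L(M2)‖_F ≤ L_f ‖M1 − M2‖_F. -/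
open scoped BigOperators Classical
open MeasureTheory ProbabilityTheory Matrix

noncomputable section

namespace NMC

variable {n1 n2 : ℕ}

/-! ### Auxiliary development for `statement18` -/

section Statement18Aux

/-- `phiF d Δ = log(1 + exp(−dΔ))`. -/
def phiF (d Δ : ℝ) : ℝ := Real.log (1 + Real.exp (-(d * Δ)))

/-- Derivative of `phiF d`. -/
def phiD (d Δ : ℝ) : ℝ := -d / (1 + Real.exp (d * Δ))

/-- Derivative of `phiD d`. -/
def psiD (d Δ : ℝ) : ℝ := d ^ 2 * Real.exp (d * Δ) / (1 + Real.exp (d * Δ)) ^ 2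

lemma one_add_exp_pos (u : ℝ) : 0 < 1 + Real.exp u := by positivity

lemma hasDerivAt_phiF (d Δ : ℝ) : HasDerivAt (phiF d) (phiD d Δ) Δ := by
  have h1 : HasDerivAt (fun x : ℝ => -(d * x)) (-d) Δ := by
    simpa using ((hasDerivAt_id Δ).const_mul d).fun_neg
  have h2 : HasDerivAt (fun x : ℝ => 1 + Real.exp (-(d * x)))
      (Real.exp (-(d * Δ)) * -d) Δ :=
    by have h := (Real.hasDerivAt_exp (-(d * Δ))).comp Δ h1; exact h.const_add 1
  have h4 := (Real.hasDerivAt_log (ne_of_gt (one_add_exp_pos (-(d * Δ))))).comp Δ h2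
  have h5 : HasDerivAt (phiF d) ((1 + Real.exp (-(d * Δ)))⁻¹ * (Real.exp (-(d * Δ)) * -d)) Δ := by
    show HasDerivAt (fun x => Real.log (1 + Real.exp (-(d * x)))) _ Δ
    simpa [phiF, Function.comp_def] using h4
  convert h5 using 1
  unfold phiD
  rw [Real.exp_neg]
  have h6 : (1 : ℝ) + Real.exp (d * Δ) ≠ 0 := by positivity
  field_simp
  ring

lemma hasDerivAt_phiD (d Δ : ℝ) : HasDerivAt (phiD d) (psiD d Δ) Δ := by
  have h1 : HasDerivAt (fun x : ℝ => 1 + Real.exp (d * x)) (Real.exp (d * Δ) * d) Δ := by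
    have h0 : HasDerivAt (fun x : ℝ => d * x) d Δ := by simpa using (hasDerivAt_id Δ).const_mul d
    exact ((Real.hasDerivAt_exp (d * Δ)).comp Δ h0).const_add 1
  have h2 : HasDerivAt (fun _ : ℝ => -d) 0 Δ := hasDerivAt_const Δ (-d)
  have h3 := h2.fun_div h1 (ne_of_gt (one_add_exp_pos (d * Δ)))
  have h4 : HasDerivAt (phiD d)
      ((0 * (1 + Real.exp (d * Δ)) - -d * (Real.exp (d * Δ) * d)) /
        (1 + Real.exp (d * Δ)) ^ 2) Δ := by
    show HasDerivAt (fun x => -d / (1 + Real.exp (d * x))) _ Δ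
    simpa [phiD] using h3
  convert h4 using 1
  unfold psiD
  ring

lemma psiD_nonneg (d Δ : ℝ) : 0 ≤ psiD d Δ := by unfold psiD; positivity

lemma psiD_le (d Δ : ℝ) : psiD d Δ ≤ d ^ 2 / 4 := by
  unfold psiD
  rw [div_le_div_iff₀ (by positivity) (by norm_num)]
  nlinarith [Real.exp_pos (d * Δ), sq_nonneg (1 - Real.exp (d * Δ)), sq_nonneg d,
    sq_nonneg (d * (1 - Real.exp (d * Δ)))]

/-- The secant slope of `phiD d` between `a` and `b`. -/
def sC (d a b : ℝ) : ℝ := if a = b then 0 else (phiD d a - phiD d b) / (a - b)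

lemma sC_eq (d a b : ℝ) : phiD d a - phiD d b = sC d a b * (a - b) := by
  unfold sC
  split_ifs with h
  · subst h; ring
  · rw [div_mul_cancel₀ _ (sub_ne_zero.mpr h)]

lemma sC_bounds_lt (d a b : ℝ) (hab : a < b) : 0 ≤ sC d a b ∧ sC d a b ≤ d ^ 2 / 4 := by
  obtain ⟨c, _, hc⟩ := exists_hasDerivAt_eq_slope (phiD d) (psiD d) hab
    (fun x _ => (hasDerivAt_phiD d x).continuousAt.continuousWithinAt)
    (fun x _ => hasDerivAt_phiD d x)
  have hne : a ≠ b := ne_of_lt hab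
  have hsc : sC d a b = psiD d c := by
    rw [sC, if_neg hne, hc]
    rw [div_eq_div_iff (sub_ne_zero.mpr hne) (sub_ne_zero.mpr (ne_of_gt hab))]
    ring
  rw [hsc]
  exact ⟨psiD_nonneg d c, psiD_le d c⟩

lemma sC_symm (d a b : ℝ) (h : b < a) : sC d a b = sC d b a := by
  unfold sC
  rw [if_neg (ne_of_gt h), if_neg (ne_of_lt h)]
  rw [div_eq_div_iff (sub_ne_zero.mpr (ne_of_gt h)) (sub_ne_zero.mpr (ne_of_lt h))]
  ring

lemma sC_nonneg (d a b : ℝ) : 0 ≤ sC d a b := by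
  rcases lt_trichotomy a b with h | h | h
  · exact (sC_bounds_lt d a b h).1
  · simp [sC, h]
  · rw [sC_symm d a b h]; exact (sC_bounds_lt d b a h).1

lemma sC_le (d a b : ℝ) : sC d a b ≤ d ^ 2 / 4 := by
  rcases lt_trichotomy a b with h | h | h
  · exact (sC_bounds_lt d a b h).2
  · simp only [sC, if_pos h]; positivity
  · rw [sC_symm d a b h]; exact (sC_bounds_lt d b a h).2

/-- Indicator that `(i',j') = (i,j)`. -/
def indE (i : Fin n1) (j : Fin n2) (i' : Fin n1) (j' : Fin n2) : ℝ :=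
  if i' = i ∧ j' = j then 1 else 0

lemma updEntry_eq (M : Mat n1 n2) (i : Fin n1) (j : Fin n2) (t : ℝ) (i' : Fin n1) (j' : Fin n2) :
    updEntry M i j t i' j' = M i' j' + indE i j i' j' * (t - M i j) := by
  unfold updEntry indE
  split_ifs with h
  · obtain ⟨h1, h2⟩ := h; subst h1; subst h2; ring
  · ring

/-- Explicit formula for the gradient of `lossL`. -/
def gradExpr (X W M : Mat n1 n2) (i : Fin n1) (j : Fin n2) : ℝ :=
  (1 / (n2 : ℝ)) * ∑ i' : Fin n1, ∑ j1 : Fin n2, ∑ j2 : Fin n2,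
      W i' j1 * W i' j2 * (phiD (X i' j1 - X i' j2) (M i' j1 - M i' j2) *
        (indE i j i' j1 - indE i j i' j2)) +
  (1 / (n1 : ℝ)) * ∑ j' : Fin n2, ∑ i1 : Fin n1, ∑ i2 : Fin n1,
      W i1 j' * W i2 j' * (phiD (X i1 j' - X i2 j') (M i1 j' - M i2 j') *
        (indE i j i1 j' - indE i j i2 j'))

lemma key_deriv (x1 x2 m1 m2 e1 e2 c : ℝ) :
    HasDerivAt (fun t : ℝ => pl x1 x2 (m1 + e1 * (t - c)) (m2 + e2 * (t - c)))
      (phiD (x1 - x2) (m1 - m2) * (e1 - e2)) c := by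
  have h1 : HasDerivAt (fun t : ℝ => m1 + e1 * (t - c)) e1 c := by
    simpa using (((hasDerivAt_id c).sub_const c).const_mul e1).const_add m1
  have h2 : HasDerivAt (fun t : ℝ => m2 + e2 * (t - c)) e2 c := by
    simpa using (((hasDerivAt_id c).sub_const c).const_mul e2).const_add m2
  have haff := h1.fun_sub h2
  have hval : m1 + e1 * (c - c) - (m2 + e2 * (c - c)) = m1 - m2 := by ring
  have hphi : HasDerivAt (phiF (x1 - x2)) (phiD (x1 - x2) (m1 - m2))
      (m1 + e1 * (c - c) - (m2 + e2 * (c - c))) := by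
    rw [hval]; exact hasDerivAt_phiF _ _
  have := hphi.comp c haff
  simpa [Function.comp_def, pl, phiF] using this

lemma hasDerivAt_loss (X W M : Mat n1 n2) (i : Fin n1) (j : Fin n2) :
    HasDerivAt (fun t => lossL X W (updEntry M i j t)) (gradExpr X W M i j) (M i j) := by
  unfold lossL gradExpr
  simp only [updEntry_eq]
  apply HasDerivAt.add
  · apply HasDerivAt.const_mul
    apply HasDerivAt.fun_sum; intro i' _
    apply HasDerivAt.fun_sum; intro j1 _
    apply HasDerivAt.fun_sum; intro j2 _
    exact (key_deriv _ _ _ _ _ _ _).const_mul (W i' j1 * W i' j2)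
  · apply HasDerivAt.const_mul
    apply HasDerivAt.fun_sum; intro j' _
    apply HasDerivAt.fun_sum; intro i1 _
    apply HasDerivAt.fun_sum; intro i2 _
    exact (key_deriv _ _ _ _ _ _ _).const_mul (W i1 j' * W i2 j')

lemma gradL_eq (X W M : Mat n1 n2) (i : Fin n1) (j : Fin n2) :
    gradL X W M i j = gradExpr X W M i j :=
  (hasDerivAt_loss X W M i j).deriv

lemma sum_indE (V : Mat n1 n2) (a : Fin n1) (b : Fin n2) :
    ∑ i : Fin n1, ∑ j : Fin n2, indE i j a b * V i j = V a b := by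
  rw [Finset.sum_eq_single a]
  · rw [Finset.sum_eq_single b]
    · simp [indE]
    · intro j' _ hne; simp [indE, Ne.symm hne]
    · intro h; exact absurd (Finset.mem_univ b) h
  · intro i' _ hne; apply Finset.sum_eq_zero; intro j' _; simp [indE, Ne.symm hne]
  · intro h; exact absurd (Finset.mem_univ a) h

lemma swap_in3 {α β γ : Type} [Fintype α] [Fintype β] [Fintype γ] (F : α → β → γ → ℝ) :
    ∑ a, ∑ b, ∑ c, F a b c = ∑ c, ∑ a, ∑ b, F a b c := by
  calc ∑ a, ∑ b, ∑ c, F a b c = ∑ a, ∑ c, ∑ b, F a b c :=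
        Finset.sum_congr rfl (fun a _ => Finset.sum_comm)
    _ = ∑ c, ∑ a, ∑ b, F a b c := Finset.sum_comm

lemma swap5 {α β γ δ ε : Type} [Fintype α] [Fintype β] [Fintype γ] [Fintype δ] [Fintype ε]
    (F : α → β → γ → δ → ε → ℝ) :
    ∑ a, ∑ b, ∑ c, ∑ d, ∑ e, F a b c d e = ∑ c, ∑ d, ∑ e, ∑ a, ∑ b, F a b c d e := by
  calc ∑ a, ∑ b, ∑ c, ∑ d, ∑ e, F a b c d e
      = ∑ c, ∑ a, ∑ b, ∑ d, ∑ e, F a b c d e := swap_in3 _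
    _ = ∑ c, ∑ d, ∑ a, ∑ b, ∑ e, F a b c d e :=
        Finset.sum_congr rfl (fun c _ => swap_in3 _)
    _ = ∑ c, ∑ d, ∑ e, ∑ a, ∑ b, F a b c d e :=
        Finset.sum_congr rfl (fun c _ => Finset.sum_congr rfl (fun d _ => swap_in3 _))

lemma collapse_row (c : Fin n1 → Fin n2 → Fin n2 → ℝ) (V : Mat n1 n2) :
    ∑ i, ∑ j, (∑ i', ∑ j1, ∑ j2, c i' j1 j2 * (indE i j i' j1 - indE i j i' j2)) * V i j
    = ∑ i', ∑ j1, ∑ j2, c i' j1 j2 * (V i' j1 - V i' j2) := by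
  calc ∑ i, ∑ j, (∑ i', ∑ j1, ∑ j2, c i' j1 j2 * (indE i j i' j1 - indE i j i' j2)) * V i j
      = ∑ i, ∑ j, ∑ i', ∑ j1, ∑ j2,
          c i' j1 j2 * (indE i j i' j1 - indE i j i' j2) * V i j := by
        simp only [Finset.sum_mul]
    _ = ∑ i', ∑ j1, ∑ j2, ∑ i, ∑ j,
          c i' j1 j2 * (indE i j i' j1 - indE i j i' j2) * V i j := swap5 _
    _ = ∑ i', ∑ j1, ∑ j2, c i' j1 j2 * (V i' j1 - V i' j2) := by
        refine Finset.sum_congr rfl (fun i' _ => Finset.sum_congr rfl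
          (fun j1 _ => Finset.sum_congr rfl (fun j2 _ => ?_)))
        have h : ∀ i j, c i' j1 j2 * (indE i j i' j1 - indE i j i' j2) * V i j
            = c i' j1 j2 * (indE i j i' j1 * V i j) - c i' j1 j2 * (indE i j i' j2 * V i j) := by
          intros; ring
        simp only [h, Finset.sum_sub_distrib, ← Finset.mul_sum]
        rw [sum_indE, sum_indE]
        ring

lemma collapse_col (c : Fin n2 → Fin n1 → Fin n1 → ℝ) (V : Mat n1 n2) :
    ∑ i, ∑ j, (∑ j', ∑ i1, ∑ i2, c j' i1 i2 * (indE i j i1 j' - indE i j i2 j')) * V i j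
    = ∑ j', ∑ i1, ∑ i2, c j' i1 i2 * (V i1 j' - V i2 j') := by
  calc ∑ i, ∑ j, (∑ j', ∑ i1, ∑ i2, c j' i1 i2 * (indE i j i1 j' - indE i j i2 j')) * V i j
      = ∑ i, ∑ j, ∑ j', ∑ i1, ∑ i2,
          c j' i1 i2 * (indE i j i1 j' - indE i j i2 j') * V i j := by
        simp only [Finset.sum_mul]
    _ = ∑ j', ∑ i1, ∑ i2, ∑ i, ∑ j,
          c j' i1 i2 * (indE i j i1 j' - indE i j i2 j') * V i j := swap5 _
    _ = ∑ j', ∑ i1, ∑ i2, c j' i1 i2 * (V i1 j' - V i2 j') := by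
        refine Finset.sum_congr rfl (fun j' _ => Finset.sum_congr rfl
          (fun i1 _ => Finset.sum_congr rfl (fun i2 _ => ?_)))
        have h : ∀ i j, c j' i1 i2 * (indE i j i1 j' - indE i j i2 j') * V i j
            = c j' i1 i2 * (indE i j i1 j' * V i j) - c j' i1 i2 * (indE i j i2 j' * V i j) := by
          intros; ring
        simp only [h, Finset.sum_sub_distrib, ← Finset.mul_sum]
        rw [sum_indE, sum_indE]
        ring

lemma weighted_CS {ι : Type} [Fintype ι] (w u v : ι → ℝ) (hw : ∀ k, 0 ≤ w k) :
    (∑ k, w k * u k * v k) ^ 2 ≤ (∑ k, w k * u k * u k) * ∑ k, w k * v k * v k := by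
  have h := Finset.sum_mul_sq_le_sq_mul_sq Finset.univ
    (fun k => Real.sqrt (w k) * u k) (fun k => Real.sqrt (w k) * v k)
  have e1 : ∀ k : ι, (Real.sqrt (w k) * u k) * (Real.sqrt (w k) * v k) = w k * u k * v k := by
    intro k; rw [mul_mul_mul_comm, Real.mul_self_sqrt (hw k)]; ring
  have e2 : ∀ k : ι, (Real.sqrt (w k) * u k) ^ 2 = w k * u k * u k := by
    intro k; rw [mul_pow, Real.sq_sqrt (hw k)]; ring
  have e3 : ∀ k : ι, (Real.sqrt (w k) * v k) ^ 2 = w k * v k * v k := by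
    intro k; rw [mul_pow, Real.sq_sqrt (hw k)]; ring
  simpa only [e1, e2, e3] using h

lemma lap {m : ℕ} (w u : Fin m → ℝ) (hw : ∀ j, w j = 0 ∨ w j = 1) (R : ℝ)
    (hR : ∑ j, w j ≤ R) :
    ∑ j1, ∑ j2, w j1 * w j2 * (u j1 - u j2) ^ 2 ≤ 2 * R * ∑ j, u j ^ 2 := by
  have hw0 : ∀ j, 0 ≤ w j := fun j => by rcases hw j with h | h <;> simp [h]
  have e1 : ∀ j1 j2 : Fin m, w j1 * w j2 * (u j1 - u j2) ^ 2
      = (w j1 * u j1 ^ 2) * w j2 + w j1 * (w j2 * u j2 ^ 2)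
        - 2 * ((w j1 * u j1) * (w j2 * u j2)) := fun _ _ => by ring
  have expand : ∑ j1, ∑ j2, w j1 * w j2 * (u j1 - u j2) ^ 2
      = 2 * ((∑ j, w j) * (∑ j, w j * u j ^ 2) - (∑ j, w j * u j) ^ 2) := by
    simp only [e1, Finset.sum_sub_distrib, Finset.sum_add_distrib, ← Finset.sum_mul,
      ← Finset.mul_sum]
    ring
  rw [expand]
  have hS : 0 ≤ ∑ j, w j := Finset.sum_nonneg fun j _ => hw0 j
  have hA : ∑ j, w j * u j ^ 2 ≤ ∑ j, u j ^ 2 := by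
    apply Finset.sum_le_sum
    intro j _
    rcases hw j with h | h
    · simp [h]; positivity
    · simp [h]
  have hA0 : 0 ≤ ∑ j, w j * u j ^ 2 :=
    Finset.sum_nonneg fun j _ => mul_nonneg (hw0 j) (sq_nonneg _)
  have hR0 : 0 ≤ R := le_trans hS hR
  have hmul := mul_le_mul hR hA hA0 hR0
  nlinarith [sq_nonneg (∑ j, w j * u j)]

/-- Index type enumerating all (row, col) interaction pairs. -/
abbrev Idx (n1 n2 : ℕ) := (Fin n1 × Fin n2 × Fin n2) ⊕ (Fin n2 × Fin n1 × Fin n1)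

/-- Nonnegative weights of the difference bilinear form. -/
def pw (X W M1 M2 : Mat n1 n2) : Idx n1 n2 → ℝ
  | Sum.inl (i, j1, j2) => 1 / (n2 : ℝ) * (W i j1 * W i j2) *
      sC (X i j1 - X i j2) (M1 i j1 - M1 i j2) (M2 i j1 - M2 i j2)
  | Sum.inr (j, i1, i2) => 1 / (n1 : ℝ) * (W i1 j * W i2 j) *
      sC (X i1 j - X i2 j) (M1 i1 j - M1 i2 j) (M2 i1 j - M2 i2 j)

/-- Pairwise differences of a matrix. -/
def pd (U : Mat n1 n2) : Idx n1 n2 → ℝ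
  | Sum.inl (i, j1, j2) => U i j1 - U i j2
  | Sum.inr (j, i1, i2) => U i1 j - U i2 j

lemma gradExpr_sub (X W M1 M2 : Mat n1 n2) (i : Fin n1) (j : Fin n2) :
    gradExpr X W M1 i j - gradExpr X W M2 i j =
    (∑ i', ∑ j1, ∑ j2, (pw X W M1 M2 (Sum.inl (i', j1, j2)) *
        pd (M1 - M2) (Sum.inl (i', j1, j2))) * (indE i j i' j1 - indE i j i' j2)) +
    (∑ j', ∑ i1, ∑ i2, (pw X W M1 M2 (Sum.inr (j', i1, i2)) *
        pd (M1 - M2) (Sum.inr (j', i1, i2))) * (indE i j i1 j' - indE i j i2 j')) := by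
  unfold gradExpr
  simp only [Finset.mul_sum]
  rw [add_sub_add_comm]
  simp only [← Finset.sum_sub_distrib]
  congr 1
  · refine Finset.sum_congr rfl (fun i' _ => Finset.sum_congr rfl
      (fun j1 _ => Finset.sum_congr rfl (fun j2 _ => ?_)))
    have h := sC_eq (X i' j1 - X i' j2) (M1 i' j1 - M1 i' j2) (M2 i' j1 - M2 i' j2)
    simp only [pw, pd, Matrix.sub_apply]
    linear_combination (1 / (n2 : ℝ) * (W i' j1 * W i' j2) *
      (indE i j i' j1 - indE i j i' j2)) * h
  · refine Finset.sum_congr rfl (fun j' _ => Finset.sum_congr rfl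
      (fun i1 _ => Finset.sum_congr rfl (fun i2 _ => ?_)))
    have h := sC_eq (X i1 j' - X i2 j') (M1 i1 j' - M1 i2 j') (M2 i1 j' - M2 i2 j')
    simp only [pw, pd, Matrix.sub_apply]
    linear_combination (1 / (n1 : ℝ) * (W i1 j' * W i2 j') *
      (indE i j i1 j' - indE i j i2 j')) * h

lemma F1 (X W M1 M2 V : Mat n1 n2) :
    ∑ i, ∑ j, (gradL X W M1 i j - gradL X W M2 i j) * V i j
    = ∑ k : Idx n1 n2, pw X W M1 M2 k * pd (M1 - M2) k * pd V k := by
  calc ∑ i, ∑ j, (gradL X W M1 i j - gradL X W M2 i j) * V i j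
      = ∑ i, ∑ j,
          ((∑ i', ∑ j1, ∑ j2, (pw X W M1 M2 (Sum.inl (i', j1, j2)) *
              pd (M1 - M2) (Sum.inl (i', j1, j2))) * (indE i j i' j1 - indE i j i' j2)) +
           (∑ j', ∑ i1, ∑ i2, (pw X W M1 M2 (Sum.inr (j', i1, i2)) *
              pd (M1 - M2) (Sum.inr (j', i1, i2))) * (indE i j i1 j' - indE i j i2 j'))) * V i j := by
        simp only [gradL_eq, gradExpr_sub]
    _ = (∑ i, ∑ j, (∑ i', ∑ j1, ∑ j2, (pw X W M1 M2 (Sum.inl (i', j1, j2)) *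
              pd (M1 - M2) (Sum.inl (i', j1, j2))) * (indE i j i' j1 - indE i j i' j2)) * V i j) +
        (∑ i, ∑ j, (∑ j', ∑ i1, ∑ i2, (pw X W M1 M2 (Sum.inr (j', i1, i2)) *
              pd (M1 - M2) (Sum.inr (j', i1, i2))) * (indE i j i1 j' - indE i j i2 j')) * V i j) := by
        simp only [add_mul, Finset.sum_add_distrib]
    _ = (∑ i', ∑ j1, ∑ j2, (pw X W M1 M2 (Sum.inl (i', j1, j2)) *
            pd (M1 - M2) (Sum.inl (i', j1, j2))) * (V i' j1 - V i' j2)) +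
        (∑ j', ∑ i1, ∑ i2, (pw X W M1 M2 (Sum.inr (j', i1, i2)) *
            pd (M1 - M2) (Sum.inr (j', i1, i2))) * (V i1 j' - V i2 j')) := by
        rw [collapse_row, collapse_col]
    _ = ∑ k : Idx n1 n2, pw X W M1 M2 k * pd (M1 - M2) k * pd V k := by
        rw [Fintype.sum_sum_type]
        simp only [Fintype.sum_prod_type, pd]

lemma obs_sq_le (X W : Mat n1 n2) {a c : Fin n1} {b d : Fin n2}
    (h1 : W a b = 1) (h2 : W c d = 1) : (X a b - X c d) ^ 2 ≤ Lx X W := by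
  set S : Set ℝ := {x : ℝ | ∃ p : Fin n1 × Fin n2, W p.1 p.2 = 1 ∧ x = X p.1 p.2} with hS
  have hsub : S ⊆ Set.range (fun p : Fin n1 × Fin n2 => X p.1 p.2) := by
    rintro x ⟨p, _, rfl⟩; exact ⟨p, rfl⟩
  have hfin : S.Finite := Set.Finite.subset (Set.finite_range _) hsub
  have hm1 : X a b ∈ S := ⟨(a, b), h1, rfl⟩
  have hm2 : X c d ∈ S := ⟨(c, d), h2, rfl⟩
  have hub1 := le_csSup hfin.bddAbove hm1
  have hub2 := le_csSup hfin.bddAbove hm2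
  have hlb1 := csInf_le hfin.bddBelow hm1
  have hlb2 := csInf_le hfin.bddBelow hm2
  unfold Lx
  rw [← hS]
  apply sq_le_sq' <;> linarith

lemma pw_nonneg (X W M1 M2 : Mat n1 n2) (hW01 : ∀ i j, W i j = 0 ∨ W i j = 1)
    (k : Idx n1 n2) : 0 ≤ pw X W M1 M2 k := by
  have hWn : ∀ i j, 0 ≤ W i j := fun i j => by rcases hW01 i j with h | h <;> simp [h]
  cases k with
  | inl p =>
    obtain ⟨i, j1, j2⟩ := p
    simp only [pw]
    have h0 : (0:ℝ) ≤ 1 / (n2 : ℝ) := by positivity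
    exact mul_nonneg (mul_nonneg h0 (mul_nonneg (hWn i j1) (hWn i j2))) (sC_nonneg _ _ _)
  | inr p =>
    obtain ⟨j, i1, i2⟩ := p
    simp only [pw]
    have h0 : (0:ℝ) ≤ 1 / (n1 : ℝ) := by positivity
    exact mul_nonneg (mul_nonneg h0 (mul_nonneg (hWn i1 j) (hWn i2 j))) (sC_nonneg _ _ _)

lemma B_bound (X W M1 M2 : Mat n1 n2) (hW01 : ∀ i j, W i j = 0 ∨ W i j = 1)
    (U : Mat n1 n2) :
    ∑ k : Idx n1 n2, pw X W M1 M2 k * pd U k * pd U k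
      ≤ Lf X W * ∑ i, ∑ j, U i j ^ 2 := by
  set Rrow := sSup (Set.range fun i : Fin n1 => ∑ j, W i j) with hRrow
  set Rcol := sSup (Set.range fun j : Fin n2 => ∑ i, W i j) with hRcol
  have hRrowle : ∀ i, ∑ j, W i j ≤ Rrow :=
    fun i => le_csSup ((Set.finite_range _).bddAbove) ⟨i, rfl⟩
  have hRcolle : ∀ j, ∑ i, W i j ≤ Rcol :=
    fun j => le_csSup ((Set.finite_range _).bddAbove) ⟨j, rfl⟩
  have hLx4 : ∀ (a c : Fin n1) (b d : Fin n2),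
      1 / (n2 : ℝ) * (W a b * W c d) * sC (X a b - X c d) (M1 a b - M1 c d) (M2 a b - M2 c d)
        ≤ 1 / (n2 : ℝ) * (W a b * W c d) * (Lx X W / 4) := by
    intro a c b d
    rcases hW01 a b with h | h
    · simp [h]
    · rcases hW01 c d with h' | h'
      · simp [h']
      · have hsc : sC (X a b - X c d) (M1 a b - M1 c d) (M2 a b - M2 c d) ≤ Lx X W / 4 := by
          have h5 := sC_le (X a b - X c d) (M1 a b - M1 c d) (M2 a b - M2 c d)
          have h6 := obs_sq_le X W h h'
          linarith
        have h0 : (0:ℝ) ≤ 1 / (n2 : ℝ) * (W a b * W c d) := by rw [h, h']; norm_num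
        exact mul_le_mul_of_nonneg_left hsc h0
  have hLx4' : ∀ (a c : Fin n1) (b d : Fin n2),
      1 / (n1 : ℝ) * (W a b * W c d) * sC (X a b - X c d) (M1 a b - M1 c d) (M2 a b - M2 c d)
        ≤ 1 / (n1 : ℝ) * (W a b * W c d) * (Lx X W / 4) := by
    intro a c b d
    rcases hW01 a b with h | h
    · simp [h]
    · rcases hW01 c d with h' | h'
      · simp [h']
      · have hsc : sC (X a b - X c d) (M1 a b - M1 c d) (M2 a b - M2 c d) ≤ Lx X W / 4 := by
          have h5 := sC_le (X a b - X c d) (M1 a b - M1 c d) (M2 a b - M2 c d)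
          have h6 := obs_sq_le X W h h'
          linarith
        have h0 : (0:ℝ) ≤ 1 / (n1 : ℝ) * (W a b * W c d) := by rw [h, h']; norm_num
        exact mul_le_mul_of_nonneg_left hsc h0
  have hLxnn : (0:ℝ) ≤ Lx X W := by unfold Lx; positivity
  -- split the sum
  rw [Fintype.sum_sum_type]
  simp only [Fintype.sum_prod_type]
  have hrow : ∑ i : Fin n1, ∑ j1 : Fin n2, ∑ j2 : Fin n2,
      pw X W M1 M2 (Sum.inl (i, j1, j2)) * pd U (Sum.inl (i, j1, j2)) *
        pd U (Sum.inl (i, j1, j2))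
      ≤ 1 / (n2 : ℝ) * (Lx X W / 4) * (2 * Rrow * ∑ i, ∑ j, U i j ^ 2) := by
    have step1 : ∀ i : Fin n1, ∑ j1 : Fin n2, ∑ j2 : Fin n2,
        pw X W M1 M2 (Sum.inl (i, j1, j2)) * pd U (Sum.inl (i, j1, j2)) *
          pd U (Sum.inl (i, j1, j2))
        ≤ 1 / (n2 : ℝ) * (Lx X W / 4) * (2 * Rrow * ∑ j, U i j ^ 2) := by
      intro i
      have e : ∀ j1 j2 : Fin n2,
          (1 / (n2 : ℝ) * (W i j1 * W i j2) * (Lx X W / 4)) * pd U (Sum.inl (i, j1, j2)) *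
            pd U (Sum.inl (i, j1, j2))
          = 1 / (n2 : ℝ) * (Lx X W / 4) * (W i j1 * W i j2 * (U i j1 - U i j2) ^ 2) := by
        intro j1 j2; simp only [pd]; ring
      calc ∑ j1, ∑ j2, pw X W M1 M2 (Sum.inl (i, j1, j2)) * pd U (Sum.inl (i, j1, j2)) *
              pd U (Sum.inl (i, j1, j2))
          ≤ ∑ j1, ∑ j2, (1 / (n2 : ℝ) * (W i j1 * W i j2) * (Lx X W / 4)) *
              pd U (Sum.inl (i, j1, j2)) * pd U (Sum.inl (i, j1, j2)) := by
            apply Finset.sum_le_sum; intro j1 _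
            apply Finset.sum_le_sum; intro j2 _
            have hsq : (0:ℝ) ≤ pd U (Sum.inl (i, j1, j2)) * pd U (Sum.inl (i, j1, j2)) :=
              mul_self_nonneg _
            calc pw X W M1 M2 (Sum.inl (i, j1, j2)) * pd U (Sum.inl (i, j1, j2)) *
                    pd U (Sum.inl (i, j1, j2))
                = pw X W M1 M2 (Sum.inl (i, j1, j2)) *
                    (pd U (Sum.inl (i, j1, j2)) * pd U (Sum.inl (i, j1, j2))) := by ring
              _ ≤ (1 / (n2 : ℝ) * (W i j1 * W i j2) * (Lx X W / 4)) *
                    (pd U (Sum.inl (i, j1, j2)) * pd U (Sum.inl (i, j1, j2))) := by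
                  apply mul_le_mul_of_nonneg_right _ hsq
                  simpa only [pw] using hLx4 i i j1 j2
              _ = (1 / (n2 : ℝ) * (W i j1 * W i j2) * (Lx X W / 4)) *
                    pd U (Sum.inl (i, j1, j2)) * pd U (Sum.inl (i, j1, j2)) := by ring
        _ = 1 / (n2 : ℝ) * (Lx X W / 4) *
              ∑ j1, ∑ j2, W i j1 * W i j2 * (U i j1 - U i j2) ^ 2 := by
            simp only [e, ← Finset.mul_sum]
        _ ≤ 1 / (n2 : ℝ) * (Lx X W / 4) * (2 * Rrow * ∑ j, U i j ^ 2) := by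
            apply mul_le_mul_of_nonneg_left _ (by positivity)
            exact lap (fun j => W i j) (fun j => U i j) (fun j => hW01 i j) Rrow (hRrowle i)
    calc ∑ i : Fin n1, ∑ j1, ∑ j2, pw X W M1 M2 (Sum.inl (i, j1, j2)) *
            pd U (Sum.inl (i, j1, j2)) * pd U (Sum.inl (i, j1, j2))
        ≤ ∑ i : Fin n1, 1 / (n2 : ℝ) * (Lx X W / 4) * (2 * Rrow * ∑ j, U i j ^ 2) := by
          exact Finset.sum_le_sum (fun i _ => step1 i)
      _ = 1 / (n2 : ℝ) * (Lx X W / 4) * (2 * Rrow * ∑ i, ∑ j, U i j ^ 2) := by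
          simp only [Finset.mul_sum]
  have hcol : ∑ j : Fin n2, ∑ i1 : Fin n1, ∑ i2 : Fin n1,
      pw X W M1 M2 (Sum.inr (j, i1, i2)) * pd U (Sum.inr (j, i1, i2)) *
        pd U (Sum.inr (j, i1, i2))
      ≤ 1 / (n1 : ℝ) * (Lx X W / 4) * (2 * Rcol * ∑ i, ∑ j, U i j ^ 2) := by
    have step1 : ∀ j : Fin n2, ∑ i1 : Fin n1, ∑ i2 : Fin n1,
        pw X W M1 M2 (Sum.inr (j, i1, i2)) * pd U (Sum.inr (j, i1, i2)) *
          pd U (Sum.inr (j, i1, i2))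
        ≤ 1 / (n1 : ℝ) * (Lx X W / 4) * (2 * Rcol * ∑ i, U i j ^ 2) := by
      intro j
      have e : ∀ i1 i2 : Fin n1,
          (1 / (n1 : ℝ) * (W i1 j * W i2 j) * (Lx X W / 4)) * pd U (Sum.inr (j, i1, i2)) *
            pd U (Sum.inr (j, i1, i2))
          = 1 / (n1 : ℝ) * (Lx X W / 4) * (W i1 j * W i2 j * (U i1 j - U i2 j) ^ 2) := by
        intro i1 i2; simp only [pd]; ring
      calc ∑ i1, ∑ i2, pw X W M1 M2 (Sum.inr (j, i1, i2)) * pd U (Sum.inr (j, i1, i2)) *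
              pd U (Sum.inr (j, i1, i2))
          ≤ ∑ i1, ∑ i2, (1 / (n1 : ℝ) * (W i1 j * W i2 j) * (Lx X W / 4)) *
              pd U (Sum.inr (j, i1, i2)) * pd U (Sum.inr (j, i1, i2)) := by
            apply Finset.sum_le_sum; intro i1 _
            apply Finset.sum_le_sum; intro i2 _
            have hsq : (0:ℝ) ≤ pd U (Sum.inr (j, i1, i2)) * pd U (Sum.inr (j, i1, i2)) :=
              mul_self_nonneg _
            calc pw X W M1 M2 (Sum.inr (j, i1, i2)) * pd U (Sum.inr (j, i1, i2)) *
                    pd U (Sum.inr (j, i1, i2))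
                = pw X W M1 M2 (Sum.inr (j, i1, i2)) *
                    (pd U (Sum.inr (j, i1, i2)) * pd U (Sum.inr (j, i1, i2))) := by ring
              _ ≤ (1 / (n1 : ℝ) * (W i1 j * W i2 j) * (Lx X W / 4)) *
                    (pd U (Sum.inr (j, i1, i2)) * pd U (Sum.inr (j, i1, i2))) := by
                  apply mul_le_mul_of_nonneg_right _ hsq
                  simpa only [pw] using hLx4' i1 i2 j j
              _ = (1 / (n1 : ℝ) * (W i1 j * W i2 j) * (Lx X W / 4)) *
                    pd U (Sum.inr (j, i1, i2)) * pd U (Sum.inr (j, i1, i2)) := by ring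
        _ = 1 / (n1 : ℝ) * (Lx X W / 4) *
              ∑ i1, ∑ i2, W i1 j * W i2 j * (U i1 j - U i2 j) ^ 2 := by
            simp only [e, ← Finset.mul_sum]
        _ ≤ 1 / (n1 : ℝ) * (Lx X W / 4) * (2 * Rcol * ∑ i, U i j ^ 2) := by
            apply mul_le_mul_of_nonneg_left _ (by positivity)
            exact lap (fun i => W i j) (fun i => U i j) (fun i => hW01 i j) Rcol (hRcolle j)
    calc ∑ j : Fin n2, ∑ i1, ∑ i2, pw X W M1 M2 (Sum.inr (j, i1, i2)) *
            pd U (Sum.inr (j, i1, i2)) * pd U (Sum.inr (j, i1, i2))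
        ≤ ∑ j : Fin n2, 1 / (n1 : ℝ) * (Lx X W / 4) * (2 * Rcol * ∑ i, U i j ^ 2) := by
          exact Finset.sum_le_sum (fun j _ => step1 j)
      _ = 1 / (n1 : ℝ) * (Lx X W / 4) * (2 * Rcol * ∑ j : Fin n2, ∑ i, U i j ^ 2) := by
          simp only [Finset.mul_sum]
      _ = 1 / (n1 : ℝ) * (Lx X W / 4) * (2 * Rcol * ∑ i, ∑ j, U i j ^ 2) := by
          rw [Finset.sum_comm]
  have hfinal : 1 / (n2 : ℝ) * (Lx X W / 4) * (2 * Rrow * ∑ i, ∑ j, U i j ^ 2)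
      + 1 / (n1 : ℝ) * (Lx X W / 4) * (2 * Rcol * ∑ i, ∑ j, U i j ^ 2)
      = Lf X W * ∑ i, ∑ j, U i j ^ 2 := by
    unfold Lf Lw
    rw [← hRrow, ← hRcol]
    ring
  linarith [add_le_add hrow hcol]

lemma Lf_nonneg (hn1 : 0 < n1) (hn2 : 0 < n2) (X W : Mat n1 n2)
    (hW01 : ∀ i j, W i j = 0 ∨ W i j = 1) : 0 ≤ Lf X W := by
  have hWn : ∀ i j, 0 ≤ W i j := fun i j => by rcases hW01 i j with h | h <;> simp [h]
  have hLxnn : (0:ℝ) ≤ Lx X W := by unfold Lx; positivity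
  have hr : (0:ℝ) ≤ sSup (Set.range fun i : Fin n1 => ∑ j, W i j) := by
    refine le_trans ?_ (le_csSup ((Set.finite_range _).bddAbove) ⟨⟨0, hn1⟩, rfl⟩)
    exact Finset.sum_nonneg fun j _ => hWn _ j
  have hc : (0:ℝ) ≤ sSup (Set.range fun j : Fin n2 => ∑ i, W i j) := by
    refine le_trans ?_ (le_csSup ((Set.finite_range _).bddAbove) ⟨⟨0, hn2⟩, rfl⟩)
    exact Finset.sum_nonneg fun i _ => hWn i _
  have hLw : 0 ≤ Lw W := by
    unfold Lw
    have : (0:ℝ) ≤ (n1 : ℝ) := by positivity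
    exact add_nonneg (div_nonneg hc (by positivity)) (div_nonneg hr (by positivity))
  unfold Lf
  positivity

end Statement18Aux

theorem statement18 (n1 n2 : ℕ) (hn1 : 0 < n1) (hn2 : 0 < n2)
    (X W : Mat n1 n2) (hW01 : ∀ i j, W i j = 0 ∨ W i j = 1)
    (hWnz : ∃ i j, W i j = 1)
    (M1 M2 : Mat n1 n2) :
    frobNorm (gradL X W M1 - gradL X W M2) ≤ Lf X W * frobNorm (M1 - M2) := by
  classical
  set D : Mat n1 n2 := gradL X W M1 - gradL X W M2 with hD
  have hDapply : ∀ i j, D i j = gradL X W M1 i j - gradL X W M2 i j := fun i j => by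
    rw [hD, Matrix.sub_apply]
  have ha_eq : ∑ i, ∑ j, D i j ^ 2
      = ∑ k : Idx n1 n2, pw X W M1 M2 k * pd (M1 - M2) k * pd D k := by
    rw [← F1 X W M1 M2 D]
    refine Finset.sum_congr rfl fun i _ => Finset.sum_congr rfl fun j _ => ?_
    rw [hDapply i j]; ring
  have hpw0 := pw_nonneg X W M1 M2 hW01
  have hCS := weighted_CS (pw X W M1 M2) (pd (M1 - M2)) (pd D) hpw0
  have hBE := B_bound X W M1 M2 hW01 (M1 - M2)
  have hBD := B_bound X W M1 M2 hW01 D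
  have hLf := Lf_nonneg hn1 hn2 X W hW01
  set a := ∑ i, ∑ j, D i j ^ 2 with haDef
  set b := ∑ i, ∑ j, (M1 - M2) i j ^ 2 with hbDef
  have ha0 : 0 ≤ a :=
    Finset.sum_nonneg fun i _ => Finset.sum_nonneg fun j _ => sq_nonneg _
  have hb0 : 0 ≤ b :=
    Finset.sum_nonneg fun i _ => Finset.sum_nonneg fun j _ => sq_nonneg _
  have hBDD0 : 0 ≤ ∑ k : Idx n1 n2, pw X W M1 M2 k * pd D k * pd D k := by
    refine Finset.sum_nonneg fun k _ => ?_
    rw [mul_assoc]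
    exact mul_nonneg (hpw0 k) (mul_self_nonneg _)
  have key : a ^ 2 ≤ (Lf X W * b) * (Lf X W * a) := by
    calc a ^ 2 = (∑ k : Idx n1 n2, pw X W M1 M2 k * pd (M1 - M2) k * pd D k) ^ 2 := by
          rw [ha_eq]
      _ ≤ (∑ k : Idx n1 n2, pw X W M1 M2 k * pd (M1 - M2) k * pd (M1 - M2) k) *
            ∑ k : Idx n1 n2, pw X W M1 M2 k * pd D k * pd D k := hCS
      _ ≤ (Lf X W * b) * (Lf X W * a) :=
          mul_le_mul hBE hBD hBDD0 (mul_nonneg hLf hb0)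
  have hfrobD : frobNorm D = Real.sqrt a := rfl
  have hfrobE : frobNorm (M1 - M2) = Real.sqrt b := rfl
  rcases eq_or_lt_of_le ha0 with h0 | hpos
  · rw [hfrobD, ← h0, Real.sqrt_zero]
    exact mul_nonneg hLf (Real.sqrt_nonneg _)
  · have hle : a ≤ Lf X W ^ 2 * b := by nlinarith
    rw [hfrobD, hfrobE]
    calc Real.sqrt a ≤ Real.sqrt (Lf X W ^ 2 * b) := Real.sqrt_le_sqrt hle
      _ = Lf X W * Real.sqrt b := by rw [Real.sqrt_mul (sq_nonneg _), Real.sqrt_sq hLf]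

end NMC
end
end
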